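/- arXiv:2006.09858 — 3 statements merged into one kernel-verified Lean document; each statement's English description precedes it below -/
import Mathlib

section
/- The ordinal capacity of d-dimensional Euclidean space equals N_d + 1, where N_d is the maximum number of unit vectors in ℝ^d with pairwise inner products at most 1/2 (equivalently, the spherical π/6-cap packing number of S^{d-1}). That is, the maximum N for which there exist N points in ℝ^d that are ordinally dense equals N_d + 1. -/
open RealInnerProductSpace

/-- A point configuration of distinct points is ordinally dense if some point's maximum
distance to the others is at most the minimum pairwise distance among the others. -/
def OrdinallyDense {S : Type*} [MetricSpace S] {N : ℕ} (x : Fin N → S) : Prop :=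
  Function.Injective x ∧
  ∃ n₀ : Fin N, ∀ n, n ≠ n₀ → ∀ m k : Fin N, m ≠ n₀ → k ≠ n₀ → m ≠ k →
    dist (x n) (x n₀) ≤ dist (x m) (x k)

lemma key_inner {E : Type*} [NormedAddCommGroup E] [InnerProductSpace ℝ E]
    (a b : E) (ha : a ≠ 0) (hb : b ≠ 0)
    (h1 : ‖a‖ ≤ ‖a - b‖) (h2 : ‖b‖ ≤ ‖a - b‖) :
    ⟪‖a‖⁻¹ • a, ‖b‖⁻¹ • b⟫ ≤ (1 : ℝ) / 2 := by
  have hA : (0 : ℝ) < ‖a‖ := norm_pos_iff.mpr ha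
  have hB : (0 : ℝ) < ‖b‖ := norm_pos_iff.mpr hb
  have hsq : ‖a - b‖ ^ 2 = ‖a‖ ^ 2 - 2 * ⟪a, b⟫ + ‖b‖ ^ 2 := by
    have := norm_sub_sq_real a b
    simpa [pow_two] using this
  rw [real_inner_smul_left, real_inner_smul_right]
  have h1' : ‖a‖ ^ 2 ≤ ‖a - b‖ ^ 2 := by nlinarith
  have h2' : ‖b‖ ^ 2 ≤ ‖a - b‖ ^ 2 := by nlinarith
  have ht : ⟪a, b⟫ ≤ ‖a‖ * ‖b‖ / 2 := by
    rcases le_total ‖a‖ ‖b‖ with h | h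
    · nlinarith
    · nlinarith
  have : ‖a‖⁻¹ * (‖b‖⁻¹ * ⟪a, b⟫) ≤ ‖a‖⁻¹ * (‖b‖⁻¹ * (‖a‖ * ‖b‖ / 2)) := by
    apply mul_le_mul_of_nonneg_left _ (by positivity)
    exact mul_le_mul_of_nonneg_left ht (by positivity)
  calc ‖a‖⁻¹ * (‖b‖⁻¹ * ⟪a, b⟫) ≤ ‖a‖⁻¹ * (‖b‖⁻¹ * (‖a‖ * ‖b‖ / 2)) := this
    _ = 1 / 2 := by field_simp

theorem ordinal_capacity_euclidean (d Nd : ℕ)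
    -- Nd is the spherical π/6-cap packing number: the maximum number of unit vectors
    -- in ℝ^d with pairwise inner products at most 1/2
    (hNd : IsGreatest {n : ℕ | ∃ v : Fin n → EuclideanSpace ℝ (Fin d),
      (∀ i, ‖v i‖ = 1) ∧ ∀ i j, i ≠ j → ⟪v i, v j⟫ ≤ (1 : ℝ) / 2} Nd) :
    IsGreatest {N : ℕ | ∃ x : Fin N → EuclideanSpace ℝ (Fin d), OrdinallyDense x}
      (Nd + 1) := by
  obtain ⟨⟨v, hv1, hv2⟩, hub⟩ := hNd
  constructor
  · -- membership: the packing plus the origin is ordinally dense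
    refine ⟨Fin.cons 0 v, ?_, ?_⟩
    · -- distance between distinct packing vectors is ≥ 1
      have hdist : ∀ i j : Fin Nd, i ≠ j → 1 ≤ ‖v i - v j‖ := by
        intro i j hij
        have hsq : ‖v i - v j‖ ^ 2 = ‖v i‖ ^ 2 - 2 * ⟪v i, v j⟫ + ‖v j‖ ^ 2 := by
          have := norm_sub_sq_real (v i) (v j)
          simpa [pow_two] using this
        have h2 := hv2 i j hij
        have : 1 ≤ ‖v i - v j‖ ^ 2 := by rw [hsq, hv1 i, hv1 j]; nlinarith
        nlinarith [norm_nonneg (v i - v j)]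
      intro p q hpq
      by_contra hne
      rcases Fin.eq_zero_or_eq_succ p with rfl | ⟨i, rfl⟩ <;>
        rcases Fin.eq_zero_or_eq_succ q with rfl | ⟨j, rfl⟩
      · exact hne rfl
      · simp only [Fin.cons_zero, Fin.cons_succ] at hpq
        have := hv1 j; rw [← hpq] at this; simp at this
      · simp only [Fin.cons_zero, Fin.cons_succ] at hpq
        have := hv1 i; rw [hpq] at this; simp at this
      · simp only [Fin.cons_succ] at hpq
        have hij : i ≠ j := fun h => hne (by rw [h])
        have := hdist i j hij
        rw [hpq] at this; simp at this; linarith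
    · refine ⟨0, fun n hn m k hm hk hmk => ?_⟩
      obtain ⟨i, rfl⟩ := Fin.eq_succ_of_ne_zero hn
      obtain ⟨j, rfl⟩ := Fin.eq_succ_of_ne_zero hm
      obtain ⟨l, rfl⟩ := Fin.eq_succ_of_ne_zero hk
      have hjl : j ≠ l := fun h => hmk (by rw [h])
      simp only [Fin.cons_succ, Fin.cons_zero, dist_eq_norm, sub_zero]
      rw [hv1 i]
      -- same norm bound as above
      have hsq : ‖v j - v l‖ ^ 2 = ‖v j‖ ^ 2 - 2 * ⟪v j, v l⟫ + ‖v l‖ ^ 2 := by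
        have := norm_sub_sq_real (v j) (v l)
        simpa [pow_two] using this
      have h2 := hv2 j l hjl
      have : 1 ≤ ‖v j - v l‖ ^ 2 := by rw [hsq, hv1 j, hv1 l]; nlinarith
      nlinarith [norm_nonneg (v j - v l)]
  · -- upper bound
    rintro N ⟨x, hinj, n₀, hord⟩
    rcases N with _ | M
    · omega
    have key : M ∈ {n : ℕ | ∃ v : Fin n → EuclideanSpace ℝ (Fin d),
        (∀ i, ‖v i‖ = 1) ∧ ∀ i j, i ≠ j → ⟪v i, v j⟫ ≤ (1 : ℝ) / 2} := by
      set c := x n₀ with hc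
      have hne0 : ∀ i : Fin M, x (n₀.succAbove i) - c ≠ 0 := by
        intro i h
        have : x (n₀.succAbove i) = x n₀ := by
          have := sub_eq_zero.mp h; rwa [hc] at this
        exact Fin.succAbove_ne n₀ i (hinj this)
      refine ⟨fun i => ‖x (n₀.succAbove i) - c‖⁻¹ • (x (n₀.succAbove i) - c), ?_, ?_⟩
      · intro i; exact norm_smul_inv_norm (hne0 i)
      · intro i j hij
        set a := x (n₀.succAbove i) - c
        set b := x (n₀.succAbove j) - c
        have hmn : n₀.succAbove i ≠ n₀.succAbove j :=
          fun h => hij (Fin.succAbove_right_injective h)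
        have hab : a - b = x (n₀.succAbove i) - x (n₀.succAbove j) := by
          simp [a, b]
        have h1 : ‖a‖ ≤ ‖a - b‖ := by
          have := hord (n₀.succAbove i) (Fin.succAbove_ne n₀ i)
            (n₀.succAbove i) (n₀.succAbove j) (Fin.succAbove_ne n₀ i)
            (Fin.succAbove_ne n₀ j) hmn
          simpa [dist_eq_norm, hab, a] using this
        have h2 : ‖b‖ ≤ ‖a - b‖ := by
          have := hord (n₀.succAbove j) (Fin.succAbove_ne n₀ j)
            (n₀.succAbove i) (n₀.succAbove j) (Fin.succAbove_ne n₀ i)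
            (Fin.succAbove_ne n₀ j) hmn
          simpa [dist_eq_norm, hab, b] using this
        exact key_inner a b (hne0 i) (hne0 j) h1 h2
    have := hub key
    omega
end

section
/- The ordinal capacity of the Euclidean plane ℝ² equals 7: there exist 7 points (a regular hexagon with unit circumradius together with its center) that are ordinally dense, and no 8 points in ℝ² are ordinally dense. -/
open Real

noncomputable def hexPt (a b : ℝ) : EuclideanSpace ℝ (Fin 2) :=
  (WithLp.equiv 2 (Fin 2 → ℝ)).symm ![a, b]

lemma hexPt_dist (a b c d : ℝ) :
    dist (hexPt a b) (hexPt c d) = Real.sqrt ((a - c) ^ 2 + (b - d) ^ 2) := by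
  rw [EuclideanSpace.dist_eq, Fin.sum_univ_two]
  simp [hexPt, Real.dist_eq, sq_abs]

noncomputable def hexCfg : Fin 7 → EuclideanSpace ℝ (Fin 2) :=
  ![hexPt 1 0, hexPt (1/2) (√3/2), hexPt (-(1/2)) (√3/2), hexPt (-1) 0,
    hexPt (-(1/2)) (-(√3/2)), hexPt (1/2) (-(√3/2)), hexPt 0 0]

lemma hex_pairwise (m k : Fin 7) (hmk : m ≠ k) : 1 ≤ dist (hexCfg m) (hexCfg k) := by
  have h3 : (√3) ^ 2 = 3 := Real.sq_sqrt (by norm_num)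
  fin_cases m <;> fin_cases k <;>
    first
      | (exact absurd rfl hmk)
      | (norm_num [hexCfg, hexPt_dist, Real.one_le_sqrt] <;>
          first
            | nlinarith [h3, Real.sqrt_nonneg 3]
            | (rw [show -(√3/2) - √3/2 = -√3 from by ring, abs_neg,
                abs_of_nonneg (Real.sqrt_nonneg 3), Real.one_le_sqrt]; norm_num))

lemma hex_center (n : Fin 7) (hn : n ≠ 6) : dist (hexCfg n) (hexCfg 6) ≤ 1 := by
  have h3 : (√3) ^ 2 = 3 := Real.sq_sqrt (by norm_num)
  have h6 : hexCfg 6 = hexPt 0 0 := rfl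
  rw [h6]
  fin_cases n <;>
    first
      | (exact absurd rfl hn)
      | (norm_num [hexCfg, hexPt_dist] <;>
          (first
            | (rw [Real.sqrt_le_one]; nlinarith [h3, Real.sqrt_nonneg 3])
            | nlinarith [h3, Real.sqrt_nonneg 3]))

lemma absSubSq (z u : ℂ) :
    ‖z - u‖ ^ 2 =
      ‖z‖ ^ 2 + ‖u‖ ^ 2 - 2 * (z * (starRingEnd ℂ) u).re := by
  rw [← Complex.normSq_eq_norm_sq, ← Complex.normSq_eq_norm_sq, ← Complex.normSq_eq_norm_sq]
  simp [Complex.normSq_apply, Complex.mul_re, Complex.sub_re, Complex.sub_im]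
  ring

lemma seven_vectors (w : Fin 7 → ℂ) (h0 : ∀ i, w i ≠ 0)
    (h : ∀ i j, i ≠ j → ‖w i‖ ≤ ‖w i - w j‖) : False := by
  have hπ := Real.pi_pos
  set θ : Fin 7 → ℝ := fun i => (w i).arg with hθ
  set t : Fin 7 → ℝ := fun i => (θ i + π) * 3 / π with htdef
  have ht1 : ∀ i, 0 < t i := by
    intro i
    have := Complex.neg_pi_lt_arg (w i)
    have : 0 < θ i + π := by simpa [hθ] using by linarith
    positivity
  have ht2 : ∀ i, t i ≤ 6 := by
    intro i
    have harg : θ i ≤ π := Complex.arg_le_pi (w i)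
    rw [htdef]
    rw [div_le_iff₀ hπ]
    linarith
  have hc1 : ∀ i, 1 ≤ ⌈t i⌉ := fun i => Int.ceil_pos.mpr (ht1 i)
  have hc2 : ∀ i, ⌈t i⌉ ≤ 6 := fun i => Int.ceil_le.mpr (by exact_mod_cast ht2 i)
  set f : Fin 7 → Fin 6 := fun i => ⟨(⌈t i⌉ - 1).toNat, by have := hc1 i; have := hc2 i; omega⟩
    with hf
  obtain ⟨i, j, hij, hfij⟩ := Fintype.exists_ne_map_eq_of_card_lt f (by simp)
  have hceil : ⌈t i⌉ = ⌈t j⌉ := by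
    have := congrArg Fin.val hfij
    simp only [hf] at this
    have h1 := hc1 i; have h2 := hc1 j
    omega
  -- |t i - t j| < 1
  have hti : t i ≤ (⌈t i⌉ : ℝ) := Int.le_ceil _
  have htj : t j ≤ (⌈t j⌉ : ℝ) := Int.le_ceil _
  have hti' : ((⌈t i⌉ : ℤ) : ℝ) < t i + 1 := Int.ceil_lt_add_one _
  have htj' : ((⌈t j⌉ : ℤ) : ℝ) < t j + 1 := Int.ceil_lt_add_one _
  have hclose : |t i - t j| < 1 := by
    rw [abs_lt]
    constructor
    · have : ((⌈t i⌉ : ℤ) : ℝ) = ((⌈t j⌉ : ℤ) : ℝ) := by exact_mod_cast hceil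
      linarith
    · have : ((⌈t i⌉ : ℤ) : ℝ) = ((⌈t j⌉ : ℤ) : ℝ) := by exact_mod_cast hceil
      linarith
  have hd : |θ i - θ j| < π / 3 := by
    have hsub : t i - t j = (θ i - θ j) * 3 / π := by rw [htdef]; ring
    rw [abs_lt] at hclose ⊢
    constructor
    · rw [hsub] at hclose
      have := hclose.1
      rw [lt_div_iff₀ hπ] at this
      linarith
    · rw [hsub] at hclose
      have := hclose.2
      rw [div_lt_iff₀ hπ] at this
      linarith
  have hcos : 1 / 2 < Real.cos (θ i - θ j) := by
    have h1 : Real.cos (π / 3) < Real.cos |θ i - θ j| := by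
      apply Real.cos_lt_cos_of_nonneg_of_le_pi (abs_nonneg _) (by linarith) hd
    rwa [Real.cos_pi_div_three, Real.cos_abs] at h1
  have hre : (w i * (starRingEnd ℂ) (w j)).re =
      ‖w i‖ * ‖w j‖ * Real.cos (θ i - θ j) := by
    have hwi := Complex.norm_mul_exp_arg_mul_I (w i)
    have hwj := Complex.norm_mul_exp_arg_mul_I (w j)
    have hconj : (starRingEnd ℂ) (w j) =
        (‖w j‖ : ℂ) * Complex.exp (((-(w j).arg : ℝ) : ℂ) * Complex.I) := by
      conv_lhs => rw [← hwj]
      rw [map_mul, Complex.conj_ofReal, ← Complex.exp_conj]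
      congr 1
      simp only [map_mul, Complex.conj_ofReal, Complex.conj_I]
      push_cast
      ring
    have key : w i * (starRingEnd ℂ) (w j) =
        ((‖w i‖ * ‖w j‖ : ℝ) : ℂ) *
          Complex.exp (((θ i - θ j : ℝ) : ℂ) * Complex.I) := by
      conv_lhs => rw [← hwi, hconj]
      rw [mul_mul_mul_comm, ← Complex.exp_add]
      push_cast
      congr 2
      ring
    rw [key, Complex.re_ofReal_mul, Complex.exp_ofReal_mul_I_re]
  set a := ‖w i‖ with ha'
  set b := ‖w j‖ with hb'
  set D := ‖w i - w j‖ with hD'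
  have ha : 0 < a := norm_pos_iff.mpr (h0 i)
  have hb : 0 < b := norm_pos_iff.mpr (h0 j)
  have hDa : a ≤ D := h i j hij
  have hDb : b ≤ D := by
    have := h j i hij.symm
    rwa [show w j - w i = -(w i - w j) from by ring, norm_neg] at this
  have heq : D ^ 2 = a ^ 2 + b ^ 2 - 2 * (a * b * Real.cos (θ i - θ j)) := by
    rw [hD', absSubSq, hre]
  rcases le_total a b with hab | hab
  · nlinarith [mul_nonneg (sub_nonneg.2 hab) ha.le, mul_pos ha hb,
      mul_le_mul hDb hDb hb.le (hb.le.trans hDb)]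
  · nlinarith [mul_nonneg (sub_nonneg.2 hab) hb.le, mul_pos ha hb,
      mul_le_mul hDa hDa ha.le (ha.le.trans hDa)]

theorem ordinal_capacity_euclidean_plane :
    IsGreatest {N : ℕ | ∃ x : Fin N → EuclideanSpace ℝ (Fin 2), OrdinallyDense x} 7 := by
  constructor
  · -- membership: hexagon plus center
    refine ⟨hexCfg, ?_, 6, ?_⟩
    · intro p q hpq
      by_contra hne
      have h1 := hex_pairwise p q hne
      rw [hpq, dist_self] at h1
      linarith
    · intro n hn m k hm hk hmk
      exact le_trans (hex_center n hn) (hex_pairwise m k hmk)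
  · -- upper bound
    rintro N ⟨x, hinj, n₀, hx⟩
    by_contra hN
    push_neg at hN
    obtain ⟨M, rfl⟩ : ∃ M, N = M + 8 := ⟨N - 8, by omega⟩
    set g : Fin 7 → Fin (M + 8) :=
      fun i => Fin.succAbove (n₀ : Fin (M + 7 + 1)) (Fin.castLE (by omega) i) with hg
    have hgne : ∀ i, g i ≠ n₀ := fun i => Fin.succAbove_ne _ _
    have hginj : Function.Injective g := by
      intro p q hpq
      exact Fin.castLE_injective _ (Fin.succAbove_right_injective (p := n₀) hpq)
    set e := Complex.orthonormalBasisOneI.repr.symm with he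
    set z : Fin (M + 8) → ℂ := fun n => e (x n) with hz
    have hzdist : ∀ p q, dist (z p) (z q) = dist (x p) (x q) := fun p q =>
      e.dist_map _ _
    have hzinj : Function.Injective z := fun p q hpq => hinj (e.injective hpq)
    set w : Fin 7 → ℂ := fun i => z (g i) - z n₀ with hw
    apply seven_vectors w
    · intro i
      exact sub_ne_zero.2 (fun hc => (hgne i) (hzinj hc))
    · intro i j hij
      have h1 : ‖w i‖ = dist (x (g i)) (x n₀) := by
        rw [hw, ← hzdist]
        simp [Complex.dist_eq]
      have h2 : ‖w i - w j‖ = dist (x (g i)) (x (g j)) := by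
        rw [hw, ← hzdist]
        simp only [Complex.dist_eq]
        ring_nf
      rw [h1, h2]
      exact hx (g i) (hgne i) (g i) (g j) (hgne i) (hgne j) (fun hc => hij (hginj hc))
end

section
/- The N-point ordinal spread of a space form S satisfies: if N ≤ K(S), then A_N(S) = C(N-1,2) + 1; in particular, for hyperbolic space H^d (which has infinite ordinal capacity), A_N(H^d) = C(N-1,2) + 1 for all N. -/
/-- The `n`-th ordinal spread of a sorted index list `pairs`. -/
noncomputable def ordinalSpread {N : ℕ} (pairs : ℕ → Fin N × Fin N) (n : ℕ) : ℕ :=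
  sInf {m | n ≤ ((Finset.range m).biUnion
    (fun r => ({(pairs r).1, (pairs r).2} : Finset (Fin N)))).card}

/-- `pairs` is a list of all unordered index pairs of `[N]` sorted by decreasing distance
of the corresponding points of `x`. -/
def IsSortedIndexList {S : Type*} [MetricSpace S] {N : ℕ} (x : Fin N → S)
    (pairs : ℕ → Fin N × Fin N) : Prop :=
  (∀ r < N.choose 2, (pairs r).1 ≠ (pairs r).2) ∧
  (∀ i j : Fin N, i ≠ j →
    ∃ r < N.choose 2, ({(pairs r).1, (pairs r).2} : Finset (Fin N)) = {i, j}) ∧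
  (∀ r < N.choose 2, ∀ s < N.choose 2, r ≠ s →
    ({(pairs r).1, (pairs r).2} : Finset (Fin N)) ≠ {(pairs s).1, (pairs s).2}) ∧
  (∀ r s, r ≤ s → s < N.choose 2 →
    dist (x (pairs s).1) (x (pairs s).2) ≤ dist (x (pairs r).1) (x (pairs r).2))

lemma pair_eq_pair' {N : ℕ} {a b c d : Fin N} (hab : a < b) (hcd : c < d)
    (h : ({a, b} : Finset (Fin N)) = {c, d}) : a = c ∧ b = d := by
  have ha : a = c ∨ a = d := by
    have : a ∈ ({c, d} : Finset (Fin N)) := h ▸ (by simp)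
    simpa using this
  have hb : b = c ∨ b = d := by
    have : b ∈ ({c, d} : Finset (Fin N)) := h ▸ (by simp)
    simpa using this
  rcases ha with rfl | rfl
  · rcases hb with rfl | rfl
    · exact absurd hab (lt_irrefl _)
    · exact ⟨rfl, rfl⟩
  · rcases hb with rfl | rfl
    · exact absurd (hab.trans hcd) (lt_irrefl _)
    · exact absurd hab (lt_irrefl _)

lemma card_ltPairs {N : ℕ} (s : Finset (Fin N)) :
    (Finset.univ.filter
      (fun p : Fin N × Fin N => p.1 < p.2 ∧ p.1 ∈ s ∧ p.2 ∈ s)).card = s.card.choose 2 := by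
  rw [← Finset.card_powersetCard 2 s]
  apply Finset.card_nbij (i := fun p => ({p.1, p.2} : Finset (Fin N)))
  · intro p hp
    simp only [Finset.mem_coe, Finset.mem_filter] at hp
    rw [Finset.mem_coe, Finset.mem_powersetCard]
    refine ⟨by intro z hz; simp at hz; rcases hz with rfl | rfl <;> tauto,
      Finset.card_pair (ne_of_lt hp.2.1)⟩
  · intro p hp q hq hpq
    simp only [Finset.coe_filter, Set.mem_setOf_eq] at hp hq
    obtain ⟨h1, h2⟩ := pair_eq_pair' hp.2.1 hq.2.1 hpq
    exact Prod.ext h1 h2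
  · intro u hu
    simp only [Finset.mem_coe, Finset.mem_powersetCard] at hu
    obtain ⟨a, b, hab, rfl⟩ := Finset.card_eq_two.mp hu.2
    have ha : a ∈ s := hu.1 (by simp)
    have hb : b ∈ s := hu.1 (by simp)
    rcases lt_or_gt_of_ne hab with h | h
    · exact ⟨(a, b), by simp [ha, hb, h], rfl⟩
    · exact ⟨(b, a), by simp [ha, hb, h], Finset.pair_comm b a⟩

lemma choose_split {N : ℕ} (hN : 2 ≤ N) : N.choose 2 = (N-1).choose 2 + (N-1) := by
  obtain ⟨n, rfl⟩ : ∃ n, N = n + 1 := ⟨N - 1, by omega⟩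
  simp [Nat.choose_succ_succ, Nat.choose_one_right]
  omega

lemma cover_full {N : ℕ} (hN : 2 ≤ N) (pairs : ℕ → Fin N × Fin N)
    (h1 : ∀ r < N.choose 2, (pairs r).1 ≠ (pairs r).2)
    (h3 : ∀ r < N.choose 2, ∀ s < N.choose 2, r ≠ s →
      ({(pairs r).1, (pairs r).2} : Finset (Fin N)) ≠ {(pairs s).1, (pairs s).2}) :
    N ≤ ((Finset.range ((N-1).choose 2 + 1)).biUnion
      (fun r => ({(pairs r).1, (pairs r).2} : Finset (Fin N)))).card := by
  have hchoose := choose_split hN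
  have hm0 : (N-1).choose 2 + 1 ≤ N.choose 2 := by omega
  have hall : ∀ i : Fin N, i ∈ ((Finset.range ((N-1).choose 2 + 1)).biUnion
      (fun r => ({(pairs r).1, (pairs r).2} : Finset (Fin N)))) := by
    intro i
    by_contra hi
    have hnot : ∀ r < (N-1).choose 2 + 1,
        i ∉ ({(pairs r).1, (pairs r).2} : Finset (Fin N)) := by
      intro r hr hmem
      exact hi (Finset.mem_biUnion.mpr ⟨r, Finset.mem_range.mpr hr, hmem⟩)
    have hcard := Finset.card_le_card_of_injOn
      (f := fun r => ({(pairs r).1, (pairs r).2} : Finset (Fin N)))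
      (s := Finset.range ((N-1).choose 2 + 1))
      (t := (Finset.univ.erase i).powersetCard 2)
      (by
        intro r hr
        rw [Finset.mem_coe, Finset.mem_range] at hr
        rw [Finset.mem_coe, Finset.mem_powersetCard]
        refine ⟨Finset.subset_erase.mpr ⟨Finset.subset_univ _, hnot r hr⟩,
          Finset.card_pair (h1 r (by omega))⟩)
      (by
        intro r hr s hs hrs
        simp only [Finset.coe_range, Set.mem_Iio] at hr hs
        by_contra hne
        exact h3 r (by omega) s (by omega) hne hrs)
    rw [Finset.card_powersetCard, Finset.card_erase_of_mem (Finset.mem_univ i),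
      Finset.card_univ, Fintype.card_fin, Finset.card_range] at hcard
    omega
  calc N = (Finset.univ : Finset (Fin N)).card := by simp
    _ ≤ _ := Finset.card_le_card (fun i _ => hall i)

lemma construction {S : Type*} [MetricSpace S] {N : ℕ} (hN : 2 ≤ N) (x : Fin N → S)
    (n₀ : Fin N)
    (hmin : ∀ n, n ≠ n₀ → ∀ m k : Fin N, m ≠ n₀ → k ≠ n₀ → m ≠ k →
      dist (x n) (x n₀) ≤ dist (x m) (x k)) :
    ∃ pairs : ℕ → Fin N × Fin N, IsSortedIndexList x pairs ∧
      ∀ r < (N-1).choose 2, (pairs r).1 ≠ n₀ ∧ (pairs r).2 ≠ n₀ := by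
  classical
  have hchoose := choose_split hN
  set T : Finset (Fin N × Fin N) := Finset.univ.filter
    (fun p : Fin N × Fin N => p.1 < p.2 ∧ p.1 ∈ (Finset.univ : Finset (Fin N)) ∧
      p.2 ∈ (Finset.univ : Finset (Fin N))) with hTdef
  have hTcard : T.card = N.choose 2 := by
    rw [hTdef, card_ltPairs, Finset.card_univ, Fintype.card_fin]
  have hTmem : ∀ p : Fin N × Fin N, p ∈ T ↔ p.1 < p.2 := by
    intro p; simp [hTdef]
  obtain e : {p // p ∈ T} ≃ Fin (N.choose 2) :=
    Fintype.equivFinOfCardEq (by rw [Fintype.card_coe]; exact hTcard)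
  set d : Fin N × Fin N → ℝ := fun p => dist (x p.1) (x p.2) with hd
  set P : Fin N × Fin N → Prop := fun p => p.1 = n₀ ∨ p.2 = n₀ with hP
  set g : Fin (N.choose 2) → ℝ ×ₗ ℕ :=
    fun r => toLex (-(d (e.symm r).1), if P (e.symm r).1 then 1 else 0) with hg
  set σ : Equiv.Perm (Fin (N.choose 2)) := Tuple.sort g with hσ
  have hmono : Monotone (g ∘ σ) := hσ ▸ Tuple.monotone_sort g
  set q : Fin (N.choose 2) → Fin N × Fin N := fun r => (e.symm (σ r)).1 with hq
  have hgval : ∀ r, g (σ r) = toLex (-(d (q r)), if P (q r) then 1 else 0) := by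
    intro r; simp only [hg, hq]
  have hqT : ∀ r, q r ∈ T := by
    intro r; rw [hq]; exact (e.symm (σ r)).2
  have hqlt : ∀ r, (q r).1 < (q r).2 := fun r => (hTmem _).mp (hqT r)
  have hqinj : Function.Injective q := by
    intro r s h
    rw [hq] at h
    exact σ.injective (e.symm.injective (Subtype.ext h))
  have hqsurj : ∀ p ∈ T, ∃ r, q r = p := by
    intro p hp
    refine ⟨σ.symm (e ⟨p, hp⟩), ?_⟩
    rw [hq]
    simp
  have hlex : ∀ r s : Fin (N.choose 2), r ≤ s →
      (-(d (q r)) < -(d (q s)) ∨ (-(d (q r)) = -(d (q s)) ∧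
        (if P (q r) then (1:ℕ) else 0) ≤ (if P (q s) then 1 else 0))) := by
    intro r s hrs
    have hle := hmono hrs
    rw [Function.comp_apply, Function.comp_apply, hgval r, hgval s, Prod.Lex.le_iff] at hle
    exact hle
  have hdist : ∀ r s : Fin (N.choose 2), r ≤ s → d (q s) ≤ d (q r) := by
    intro r s hrs
    rcases hlex r s hrs with h | ⟨h1, _⟩ <;> linarith
  have hPmin : ∀ r s : Fin (N.choose 2), P (q r) → ¬ P (q s) → d (q r) ≤ d (q s) := by
    intro r s hPr hPs
    simp only [hP] at hPr hPs
    push_neg at hPs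
    rcases hPr with h1 | h2
    · have hne : (q r).2 ≠ n₀ := by
        intro h; exact absurd (h1.trans h.symm) (ne_of_lt (hqlt r))
      have := hmin (q r).2 hne (q s).1 (q s).2 hPs.1 hPs.2 (ne_of_lt (hqlt s))
      simp only [hd]
      calc dist (x (q r).1) (x (q r).2) = dist (x (q r).2) (x n₀) := by
            rw [h1, dist_comm]
        _ ≤ _ := this
    · have hne : (q r).1 ≠ n₀ := by
        intro h; exact absurd (h.trans h2.symm) (ne_of_lt (hqlt r))
      have := hmin (q r).1 hne (q s).1 (q s).2 hPs.1 hPs.2 (ne_of_lt (hqlt s))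
      simp only [hd]
      calc dist (x (q r).1) (x (q r).2) = dist (x (q r).1) (x n₀) := by rw [h2]
        _ ≤ _ := this
  have hup : ∀ r s : Fin (N.choose 2), r ≤ s → P (q r) → P (q s) := by
    intro r s hrs hPr
    by_contra hPs
    have hds := hPmin r s hPr hPs
    rcases hlex r s hrs with h | ⟨h1, h2⟩
    · linarith
    · rw [if_pos hPr, if_neg hPs] at h2
      omega
  have hFcard : (Finset.univ.filter (fun s : Fin (N.choose 2) => ¬ P (q s))).card
      = (N-1).choose 2 := by
    have hE : ((Finset.univ.erase n₀ : Finset (Fin N))).card = N - 1 := by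
      rw [Finset.card_erase_of_mem (Finset.mem_univ _), Finset.card_univ, Fintype.card_fin]
    rw [← hE, ← card_ltPairs (Finset.univ.erase n₀)]
    apply Finset.card_nbij (i := q)
    · intro r hr
      simp only [Finset.mem_coe, Finset.mem_filter, Finset.mem_univ, true_and] at hr ⊢
      simp only [hP] at hr
      push_neg at hr
      exact ⟨hqlt r, Finset.mem_erase.mpr ⟨hr.1, Finset.mem_univ _⟩,
        Finset.mem_erase.mpr ⟨hr.2, Finset.mem_univ _⟩⟩
    · exact fun a _ b _ h => hqinj h
    · intro p hp
      simp only [Finset.coe_filter, Set.mem_setOf_eq, Finset.mem_univ, true_and] at hp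
      obtain ⟨hlt, hp1, hp2⟩ := hp
      obtain ⟨r, hr⟩ := hqsurj p ((hTmem p).mpr hlt)
      refine ⟨r, ?_, hr⟩
      simp only [Finset.coe_filter, Set.mem_setOf_eq, Finset.mem_univ, true_and]
      simp only [hP, hr]
      push_neg
      exact ⟨(Finset.mem_erase.mp hp1).1, (Finset.mem_erase.mp hp2).1⟩
  have hA3 : ∀ r : Fin (N.choose 2), (r : ℕ) < (N-1).choose 2 → ¬ P (q r) := by
    intro r hr hPr
    have hsub := Finset.card_le_card_of_injOn (f := Fin.val)
      (s := Finset.univ.filter (fun s : Fin (N.choose 2) => ¬ P (q s)))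
      (t := Finset.range (r : ℕ))
      (by
        intro s hs
        simp only [Finset.mem_coe, Finset.mem_filter, Finset.mem_univ, true_and] at hs
        rw [Finset.mem_coe, Finset.mem_range]
        by_contra hge
        push_neg at hge
        exact hs (hup r s (by omega) hPr))
      (fun a _ b _ h => Fin.val_injective h)
    rw [hFcard, Finset.card_range] at hsub
    omega
  have hMpos : 0 < N.choose 2 := Nat.choose_pos hN
  set pairs : ℕ → Fin N × Fin N :=
    fun r => if h : r < N.choose 2 then q ⟨r, h⟩ else q ⟨0, hMpos⟩ with hpairs
  have hpe : ∀ r (h : r < N.choose 2), pairs r = q ⟨r, h⟩ := by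
    intro r h; rw [hpairs]; exact dif_pos h
  refine ⟨pairs, ⟨?_, ?_, ?_, ?_⟩, ?_⟩
  · intro r hr
    rw [hpe r hr]
    exact ne_of_lt (hqlt _)
  · intro i j hij
    rcases lt_or_gt_of_ne hij with h | h
    · obtain ⟨r, hr⟩ := hqsurj (i, j) ((hTmem _).mpr h)
      refine ⟨(r : ℕ), r.isLt, ?_⟩
      rw [hpe _ r.isLt, Fin.eta, hr]
    · obtain ⟨r, hr⟩ := hqsurj (j, i) ((hTmem _).mpr h)
      refine ⟨(r : ℕ), r.isLt, ?_⟩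
      rw [hpe _ r.isLt, Fin.eta, hr]
      exact Finset.pair_comm j i
  · intro r hr s hs hrs heq
    rw [hpe r hr, hpe s hs] at heq
    obtain ⟨h1, h2⟩ := pair_eq_pair' (hqlt _) (hqlt _) heq
    have heq2 : q ⟨r, hr⟩ = q ⟨s, hs⟩ := Prod.ext h1 h2
    exact hrs (by simpa using congrArg Fin.val (hqinj heq2))
  · intro r s hrs hs
    have hr : r < N.choose 2 := lt_of_le_of_lt hrs hs
    rw [hpe r hr, hpe s hs]
    exact hdist ⟨r, hr⟩ ⟨s, hs⟩ hrs
  · intro r hr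
    have hrM : r < N.choose 2 := by omega
    rw [hpe r hrM]
    have hnP := hA3 ⟨r, hrM⟩ hr
    simp only [hP] at hnP
    push_neg at hnP
    exact hnP

/-- If `N` is at most the ordinal capacity of `S` (i.e. there is an ordinally dense set of
`N` points in `S`), then the `N`-point ordinal spread of `S` equals `C(N-1,2) + 1`. -/
theorem n_point_ordinal_spread_at_capacity {S : Type*} [MetricSpace S]
    (N : ℕ) (hN : 2 ≤ N)
    (hcap : ∃ x : Fin N → S, OrdinallyDense x) :
    IsGreatest {a : ℕ | ∃ x : Fin N → S, ∃ pairs : ℕ → Fin N × Fin N,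
        IsSortedIndexList x pairs ∧ a = ordinalSpread pairs N}
      ((N - 1).choose 2 + 1) := by
  constructor
  · -- the supremum is attained
    obtain ⟨x, hinj, n₀, hmin⟩ := hcap
    obtain ⟨pairs, hsort, hA⟩ := construction hN x n₀ hmin
    refine ⟨x, pairs, hsort, ?_⟩
    unfold ordinalSpread
    apply le_antisymm
    · refine le_csInf ⟨_, cover_full hN pairs hsort.1 hsort.2.2.1⟩ ?_
      intro b hb
      simp only [Set.mem_setOf_eq] at hb
      by_contra hlt
      push_neg at hlt
      have hsub : ((Finset.range b).biUnion
          (fun r => ({(pairs r).1, (pairs r).2} : Finset (Fin N))))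
          ⊆ Finset.univ.erase n₀ := by
        intro i hi
        rw [Finset.mem_biUnion] at hi
        obtain ⟨r, hr, hi⟩ := hi
        rw [Finset.mem_range] at hr
        have hA' := hA r (by omega)
        refine Finset.mem_erase.mpr ⟨?_, Finset.mem_univ _⟩
        simp only [Finset.mem_insert, Finset.mem_singleton] at hi
        rcases hi with rfl | rfl
        · exact hA'.1
        · exact hA'.2
      have hcard := Finset.card_le_card hsub
      rw [Finset.card_erase_of_mem (Finset.mem_univ _), Finset.card_univ,
        Fintype.card_fin] at hcard
      omega
    · exact Nat.sInf_le (cover_full hN pairs hsort.1 hsort.2.2.1)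
  · -- upper bound
    rintro a ⟨x, pairs, hsort, rfl⟩
    exact Nat.sInf_le (cover_full hN pairs hsort.1 hsort.2.2.1)
end
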